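/- Let ε > 0, let A, Q : [0,1] → ℝ^{n×n}, B : [0,1] → ℝ^{n×m}, R : [0,1] → ℝ^{m×m} with R(τ) invertible for all τ, and write S(τ) := B(τ) R(τ)⁻¹ B(τ)ᵀ. Suppose P_a, P_b : [0,1] → ℝ^{n×n} are differentiable, each satisfies the differential Riccati equation ε Ṗ(τ) = −A(τ)ᵀ P(τ) − P(τ) A(τ) + P(τ) S(τ) P(τ) − Q(τ), and P_b(τ) − P_a(τ) is invertible for every τ ∈ [0,1]. Let x, p : [0,1] → ℝⁿ be differentiable solutions of the Hamiltonian system ε ẋ = A x − S p, ε ṗ = −Q x − Aᵀ p. Define x_b(τ) := (P_b(τ) − P_a(τ))⁻¹ (p(τ) − P_a(τ) x(τ)) and x_a(τ) := x(τ) − x_b(τ). Then x_a and x_b are differentiable and satisfy the decoupled equations ε ẋ_a(τ) = (A(τ) − S(τ) P_a(τ)) x_a(τ) and ε ẋ_b(τ) = (A(τ) − S(τ) P_b(τ)) x_b(τ) for all τ ∈ [0,1]. -/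

import Mathlib

open Matrix Set

attribute [local instance] Matrix.normedAddCommGroup Matrix.normedSpace

variable {n : ℕ} {τ : ℝ}

private lemma vecEntryD {v : ℝ → Fin n → ℝ} {v' : Fin n → ℝ}
    (h : HasDerivAt v v' τ) (i : Fin n) : HasDerivAt (fun t => v t i) (v' i) τ := by
  exact hasDerivAt_pi.mp h i

private lemma entryD {M : ℝ → Matrix (Fin n) (Fin n) ℝ} {M' : Matrix (Fin n) (Fin n) ℝ}
    (h : HasDerivAt M M' τ) (i j : Fin n) : HasDerivAt (fun t => M t i j) (M' i j) τ := by
  exact hasDerivAt_pi.mp (hasDerivAt_pi.mp h i) j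

private lemma piD {v : ℝ → Fin n → ℝ} {v' : Fin n → ℝ}
    (h : ∀ i, HasDerivAt (fun t => v t i) (v' i) τ) : HasDerivAt v v' τ := by
  exact hasDerivAt_pi.mpr h

private lemma matD {M : ℝ → Matrix (Fin n) (Fin n) ℝ} {M' : Matrix (Fin n) (Fin n) ℝ}
    (h : ∀ i j, HasDerivAt (fun t => M t i j) (M' i j) τ) : HasDerivAt M M' τ := by
  have h1 : ∀ i, HasFDerivAt (fun t => M t i) ((1 : ℝ →L[ℝ] ℝ).smulRight (M' i)) τ := by
    intro i
    exact (piD (h i)).hasFDerivAt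
  exact hasDerivAt_pi.mpr fun i => hasDerivAt_pi.mpr (h i)

private lemma mulVecD {M : ℝ → Matrix (Fin n) (Fin n) ℝ} {M' : Matrix (Fin n) (Fin n) ℝ}
    {v : ℝ → Fin n → ℝ} {v' : Fin n → ℝ}
    (hM : HasDerivAt M M' τ) (hv : HasDerivAt v v' τ) :
    HasDerivAt (fun t => M t *ᵥ v t) (M' *ᵥ v τ + M τ *ᵥ v') τ := by
  apply piD
  intro i
  have := HasDerivAt.fun_sum (u := Finset.univ) (A := fun j t => M t i j * v t j)
    (A' := fun j => M' i j * v τ j + M τ i j * v' j)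
    (fun j _ => (entryD hM i j).mul (vecEntryD hv j))
  simpa [Matrix.mulVec, dotProduct, Finset.sum_add_distrib] using this

private lemma matMulD {M N : ℝ → Matrix (Fin n) (Fin n) ℝ} {M' N' : Matrix (Fin n) (Fin n) ℝ}
    (hM : HasDerivAt M M' τ) (hN : HasDerivAt N N' τ) :
    HasDerivAt (fun t => M t * N t) (M' * N τ + M τ * N') τ := by
  apply matD
  intro i j
  have := HasDerivAt.fun_sum (u := Finset.univ) (A := fun k t => M t i k * N t k j)
    (A' := fun k => M' i k * N τ k j + M τ i k * N' k j)
    (fun k _ => (entryD hM i k).mul (entryD hN k j))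
  simpa [Matrix.mul_apply, Finset.sum_add_distrib] using this

private lemma detD {M : ℝ → Matrix (Fin n) (Fin n) ℝ}
    (h : ∀ i j, DifferentiableAt ℝ (fun t => M t i j) τ) :
    DifferentiableAt ℝ (fun t => (M t).det) τ := by
  simp_rw [Matrix.det_apply']
  apply DifferentiableAt.fun_sum
  intro σ _
  exact ((DifferentiableAt.fun_finsetProd fun i _ => h (σ i) i)).const_mul _

private lemma adjD {M : ℝ → Matrix (Fin n) (Fin n) ℝ}
    (h : ∀ i j, DifferentiableAt ℝ (fun t => M t i j) τ) (i j : Fin n) :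
    DifferentiableAt ℝ (fun t => (M t).adjugate i j) τ := by
  simp_rw [Matrix.adjugate_apply]
  apply detD
  intro k l
  simp_rw [Matrix.updateRow_apply]
  by_cases hk : k = j
  · simp [hk]
  · simpa [hk] using h k l

private lemma invD {M : ℝ → Matrix (Fin n) (Fin n) ℝ}
    (h : ∀ i j, DifferentiableAt ℝ (fun t => M t i j) τ)
    (hdet : (M τ).det ≠ 0) :
    DifferentiableAt ℝ (fun t => (M t)⁻¹) τ := by
  refine differentiableAt_pi.mpr ?_
  intro i
  rw [differentiableAt_pi]
  intro j
  simp_rw [Matrix.inv_def, Matrix.smul_apply, smul_eq_mul, Ring.inverse_eq_inv']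
  exact ((detD h).inv hdet).mul (adjD h i j)

/-- **The Riccati transformation decouples the Hamiltonian system.**
If `P_a, P_b` solve the differential Riccati equation
`ε Ṗ = −AᵀP − PA + P S P − Q` (with `S = B R⁻¹ Bᵀ`), `P_b − P_a` is everywhere
invertible, and `x, p` solve the Hamiltonian system `ε ẋ = A x − S p`,
`ε ṗ = −Q x − Aᵀ p`, then `x_b := (P_b − P_a)⁻¹ (p − P_a x)` and `x_a := x − x_b`
are differentiable and satisfy the decoupled equations
`ε ẋ_a = (A − S P_a) x_a` and `ε ẋ_b = (A − S P_b) x_b` on `[0,1]`. -/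
theorem hamiltonian_system_decouples {n m : ℕ}
    (ε : ℝ) (hε : 0 < ε)
    (A Q : ℝ → Matrix (Fin n) (Fin n) ℝ) (B : ℝ → Matrix (Fin n) (Fin m) ℝ)
    (R : ℝ → Matrix (Fin m) (Fin m) ℝ) (hR : ∀ τ, IsUnit (R τ))
    (S : ℝ → Matrix (Fin n) (Fin n) ℝ) (hS : ∀ τ, S τ = B τ * (R τ)⁻¹ * (B τ)ᵀ)
    (Pa Pb : ℝ → Matrix (Fin n) (Fin n) ℝ)
    (hPa : ∀ τ ∈ Icc (0 : ℝ) 1, ∃ Pa' : Matrix (Fin n) (Fin n) ℝ,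
      HasDerivAt Pa Pa' τ ∧
      ε • Pa' = -((A τ)ᵀ * Pa τ) - Pa τ * A τ + Pa τ * S τ * Pa τ - Q τ)
    (hPb : ∀ τ ∈ Icc (0 : ℝ) 1, ∃ Pb' : Matrix (Fin n) (Fin n) ℝ,
      HasDerivAt Pb Pb' τ ∧
      ε • Pb' = -((A τ)ᵀ * Pb τ) - Pb τ * A τ + Pb τ * S τ * Pb τ - Q τ)
    (hinv : ∀ τ ∈ Icc (0 : ℝ) 1, IsUnit (Pb τ - Pa τ))
    (x p : ℝ → (Fin n → ℝ))
    (hx : ∀ τ ∈ Icc (0 : ℝ) 1, ∃ x' : Fin n → ℝ,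
      HasDerivAt x x' τ ∧ ε • x' = A τ *ᵥ x τ - S τ *ᵥ p τ)
    (hp : ∀ τ ∈ Icc (0 : ℝ) 1, ∃ p' : Fin n → ℝ,
      HasDerivAt p p' τ ∧ ε • p' = -(Q τ *ᵥ x τ) - (A τ)ᵀ *ᵥ p τ)
    (xb xa : ℝ → (Fin n → ℝ))
    (hxb : ∀ τ, xb τ = (Pb τ - Pa τ)⁻¹ *ᵥ (p τ - Pa τ *ᵥ x τ))
    (hxa : ∀ τ, xa τ = x τ - xb τ) :
    ∀ τ ∈ Icc (0 : ℝ) 1,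
      (∃ xa' : Fin n → ℝ, HasDerivAt xa xa' τ ∧
        ε • xa' = (A τ - S τ * Pa τ) *ᵥ xa τ) ∧
      (∃ xb' : Fin n → ℝ, HasDerivAt xb xb' τ ∧
        ε • xb' = (A τ - S τ * Pb τ) *ᵥ xb τ) := by
  intro τ hτ
  obtain ⟨Pa', hPa', hεPa⟩ := hPa τ hτ
  obtain ⟨Pb', hPb', hεPb⟩ := hPb τ hτ
  obtain ⟨x', hx', hεx⟩ := hx τ hτ
  obtain ⟨p', hp', hεp⟩ := hp τ hτ
  -- the difference D = Pb - Pa and its inverse E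
  have hD : HasDerivAt (fun t => Pb t - Pa t) (Pb' - Pa') τ := hPb'.sub hPa'
  have hDu : IsUnit (Pb τ - Pa τ) := hinv τ hτ
  have hdet0 : (Pb τ - Pa τ).det ≠ 0 :=
    isUnit_iff_ne_zero.mp ((Matrix.isUnit_iff_isUnit_det _).mp hDu)
  have hDent : ∀ i j, DifferentiableAt ℝ (fun t => (Pb t - Pa t) i j) τ :=
    fun i j => (entryD hD i j).differentiableAt
  have hEdiff : DifferentiableAt ℝ (fun t => (Pb t - Pa t)⁻¹) τ := invD hDent hdet0
  obtain ⟨E', hE⟩ : ∃ E', HasDerivAt (fun t => (Pb t - Pa t)⁻¹) E' τ :=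
    ⟨_, hEdiff.hasDerivAt⟩
  have hED : (Pb τ - Pa τ)⁻¹ * (Pb τ - Pa τ) = 1 := Matrix.nonsing_inv_mul _
    ((Matrix.isUnit_iff_isUnit_det _).mp hDu)
  have hDE : (Pb τ - Pa τ) * (Pb τ - Pa τ)⁻¹ = 1 := Matrix.mul_nonsing_inv _
    ((Matrix.isUnit_iff_isUnit_det _).mp hDu)
  -- eventual invertibility near τ
  have hdetC : ContinuousAt (fun t => (Pb t - Pa t).det) τ := (detD hDent).continuousAt
  have hev : ∀ᶠ t in nhds τ, (Pb t - Pa t).det ≠ 0 := hdetC.eventually_ne hdet0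
  have hev1 : (fun t => (Pb t - Pa t)⁻¹ * (Pb t - Pa t)) =ᶠ[nhds τ] (fun _ => 1) :=
    hev.mono fun t ht => Matrix.nonsing_inv_mul _ (isUnit_iff_ne_zero.mpr ht)
  -- derivative relation for the inverse
  have hprod : HasDerivAt (fun t => (Pb t - Pa t)⁻¹ * (Pb t - Pa t))
      (E' * (Pb τ - Pa τ) + (Pb τ - Pa τ)⁻¹ * (Pb' - Pa')) τ := matMulD hE hD
  have hconst : HasDerivAt (fun t => (Pb t - Pa t)⁻¹ * (Pb t - Pa t)) 0 τ :=
    (hasDerivAt_const τ (1 : Matrix (Fin n) (Fin n) ℝ)).congr_of_eventuallyEq hev1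
  have huniq : E' * (Pb τ - Pa τ) + (Pb τ - Pa τ)⁻¹ * (Pb' - Pa') = 0 :=
    hprod.unique hconst
  -- derivative of w = p - Pa x
  have hw : HasDerivAt (fun t => p t - Pa t *ᵥ x t)
      (p' - (Pa' *ᵥ x τ + Pa τ *ᵥ x')) τ := hp'.sub (mulVecD hPa' hx')
  -- derivative of xb
  have hxbfun : xb = fun t => (Pb t - Pa t)⁻¹ *ᵥ (p t - Pa t *ᵥ x t) := funext hxb
  have hxbD : HasDerivAt xb
      (E' *ᵥ (p τ - Pa τ *ᵥ x τ) + (Pb τ - Pa τ)⁻¹ *ᵥ (p' - (Pa' *ᵥ x τ + Pa τ *ᵥ x'))) τ := by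
    rw [hxbfun]; exact mulVecD hE hw
  -- key algebraic identities
  have hεD' : ε • (Pb' - Pa') = -((A τ)ᵀ * (Pb τ - Pa τ)) - (Pb τ - Pa τ) * A τ
      + Pb τ * S τ * Pb τ - Pa τ * S τ * Pa τ := by
    rw [smul_sub, hεPa, hεPb]; noncomm_ring
  have hE'eq : E' = -((Pb τ - Pa τ)⁻¹ * (Pb' - Pa') * (Pb τ - Pa τ)⁻¹) := by
    have h1 : E' * (Pb τ - Pa τ) = -((Pb τ - Pa τ)⁻¹ * (Pb' - Pa')) :=
      eq_neg_of_add_eq_zero_left huniq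
    calc E' = E' * ((Pb τ - Pa τ) * (Pb τ - Pa τ)⁻¹) := by rw [hDE, mul_one]
      _ = (E' * (Pb τ - Pa τ)) * (Pb τ - Pa τ)⁻¹ := by rw [mul_assoc]
      _ = -((Pb τ - Pa τ)⁻¹ * (Pb' - Pa')) * (Pb τ - Pa τ)⁻¹ := by rw [h1]
      _ = -((Pb τ - Pa τ)⁻¹ * (Pb' - Pa') * (Pb τ - Pa τ)⁻¹) := by rw [neg_mul]
  have hεE' : ε • E' = -((Pb τ - Pa τ)⁻¹ * (ε • (Pb' - Pa')) * (Pb τ - Pa τ)⁻¹) := by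
    rw [hE'eq, smul_neg, mul_smul_comm, smul_mul_assoc]
  have hbr : -(ε • (Pb' - Pa')) + (-(A τ)ᵀ + Pa τ * S τ) * (Pb τ - Pa τ)
      = (Pb τ - Pa τ) * (A τ - S τ * Pb τ) := by
    rw [hεD']; noncomm_ring
  have hmat : -((Pb τ - Pa τ)⁻¹ * (ε • (Pb' - Pa')) * (Pb τ - Pa τ)⁻¹) * (Pb τ - Pa τ)
      + (Pb τ - Pa τ)⁻¹ * ((-(A τ)ᵀ + Pa τ * S τ) * (Pb τ - Pa τ))
      = A τ - S τ * Pb τ := by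
    have h4 : ((Pb τ - Pa τ)⁻¹ * (ε • (Pb' - Pa')) * (Pb τ - Pa τ)⁻¹) * (Pb τ - Pa τ)
        = (Pb τ - Pa τ)⁻¹ * (ε • (Pb' - Pa')) := by
      rw [mul_assoc ((Pb τ - Pa τ)⁻¹ * (ε • (Pb' - Pa'))) _ _, hED, mul_one]
    calc -((Pb τ - Pa τ)⁻¹ * (ε • (Pb' - Pa')) * (Pb τ - Pa τ)⁻¹) * (Pb τ - Pa τ)
        + (Pb τ - Pa τ)⁻¹ * ((-(A τ)ᵀ + Pa τ * S τ) * (Pb τ - Pa τ))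
        = -((Pb τ - Pa τ)⁻¹ * (ε • (Pb' - Pa')))
          + (Pb τ - Pa τ)⁻¹ * ((-(A τ)ᵀ + Pa τ * S τ) * (Pb τ - Pa τ)) := by
          rw [neg_mul, h4]
      _ = (Pb τ - Pa τ)⁻¹ * (-(ε • (Pb' - Pa'))
            + (-(A τ)ᵀ + Pa τ * S τ) * (Pb τ - Pa τ)) := by rw [mul_add, mul_neg]
      _ = (Pb τ - Pa τ)⁻¹ * ((Pb τ - Pa τ) * (A τ - S τ * Pb τ)) := by rw [hbr]
      _ = ((Pb τ - Pa τ)⁻¹ * (Pb τ - Pa τ)) * (A τ - S τ * Pb τ) := (mul_assoc _ _ _).symm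
      _ = A τ - S τ * Pb τ := by rw [hED, one_mul]
  -- w τ in terms of xb τ
  have hwv : p τ - Pa τ *ᵥ x τ = (Pb τ - Pa τ) *ᵥ xb τ := by
    rw [hxb τ, Matrix.mulVec_mulVec, hDE, Matrix.one_mulVec]
  -- ε • w' identity
  have hεw : ε • (p' - (Pa' *ᵥ x τ + Pa τ *ᵥ x'))
      = (-(A τ)ᵀ + Pa τ * S τ) *ᵥ (p τ - Pa τ *ᵥ x τ) := by
    have e1 : ε • (Pa' *ᵥ x τ) = (ε • Pa') *ᵥ x τ := (Matrix.smul_mulVec _ _ _).symm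
    have e2 : ε • (Pa τ *ᵥ x') = Pa τ *ᵥ (ε • x') := (Matrix.mulVec_smul _ _ _).symm
    rw [smul_sub, smul_add, e1, e2, hεPa, hεp, hεx]
    simp only [Matrix.add_mulVec, Matrix.sub_mulVec, Matrix.neg_mulVec,
      Matrix.mulVec_sub, Matrix.mulVec_add, ← Matrix.mulVec_mulVec]
    abel
  -- the xb equation
  have hxbEq : ε • (E' *ᵥ (p τ - Pa τ *ᵥ x τ)
        + (Pb τ - Pa τ)⁻¹ *ᵥ (p' - (Pa' *ᵥ x τ + Pa τ *ᵥ x')))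
      = (A τ - S τ * Pb τ) *ᵥ xb τ := by
    rw [smul_add, ← Matrix.smul_mulVec, ← Matrix.mulVec_smul, hεE', hεw, hwv]
    simp only [Matrix.mulVec_mulVec]
    rw [← Matrix.add_mulVec, hmat]
  refine ⟨?_, ⟨_, hxbD, hxbEq⟩⟩
  -- the xa part
  have hxafun : xa = fun t => x t - xb t := funext hxa
  have hxaD : HasDerivAt xa (x' - (E' *ᵥ (p τ - Pa τ *ᵥ x τ)
      + (Pb τ - Pa τ)⁻¹ *ᵥ (p' - (Pa' *ᵥ x τ + Pa τ *ᵥ x')))) τ := by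
    rw [hxafun]; exact hx'.sub hxbD
  refine ⟨_, hxaD, ?_⟩
  have hpτ : p τ = (Pb τ - Pa τ) *ᵥ xb τ + Pa τ *ᵥ x τ := by
    rw [← hwv]; abel
  rw [smul_sub, hεx, hxbEq, hxa τ, hpτ]
  simp only [Matrix.add_mulVec, Matrix.sub_mulVec, Matrix.neg_mulVec,
    Matrix.mulVec_sub, Matrix.mulVec_add, ← Matrix.mulVec_mulVec]
  abel
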